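/- Let X be a finite-dimensional real inner product space and F a finite semilattice of linear subspaces of X (closed under intersection) with {0} ∈ F and X ∉ F. Let δ : X → ∏_{Y ∈ F} cl(X/Y) be the map x ↦ (π_{X/Y}(x))_{Y ∈ F}, where cl(X/Y) denotes the radial compactification of X/Y (a compact Hausdorff space) and π_{X/Y} the quotient map. Then δ is injective and a topological embedding of X onto its image, and the closure of δ(X) in the compact product ∏_{Y ∈ F} cl(X/Y) is a compactification of X (a compact Hausdorff space containing a dense homeomorphic copy of X). -/
import Mathlib


/-- Let `F` be a finite semilattice of linear subspaces of a finite-dimensional real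
inner product space `X`, with `{0} ∈ F` and `X ∉ F`. For each subspace `Y`, let
`C Y` be a radial compactification of `X/Y`: a compact Hausdorff space together with
a topological embedding `j Y : X/Y → C Y` with open dense range. Then the diagonal
map `δ : X → ∏_{Y ∈ F} C Y`, `δ(x)(Y) = j Y (x + Y)`, is injective and a topological
embedding, and the closure of its range in the compact product is compact (a
compactification of `X` containing a dense homeomorphic copy of `X`). -/
theorem diagonal_map_embedding_compactification {X : Type*} [NormedAddCommGroup X]
    [InnerProductSpace ℝ X] [FiniteDimensional ℝ X]
    (F : Finset (Submodule ℝ X))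
    (hmeet : ∀ A ∈ F, ∀ B ∈ F, A ⊓ B ∈ F)
    (hbot : (⊥ : Submodule ℝ X) ∈ F) (htop : (⊤ : Submodule ℝ X) ∉ F)
    (C : Submodule ℝ X → Type*) [∀ Y, TopologicalSpace (C Y)]
    [∀ Y, CompactSpace (C Y)] [∀ Y, T2Space (C Y)]
    (j : ∀ Y : Submodule ℝ X, (X ⧸ Y) → C Y)
    (hjemb : ∀ Y, Topology.IsEmbedding (j Y))
    (hjopen : ∀ Y, IsOpen (Set.range (j Y)))
    (hjdense : ∀ Y, DenseRange (j Y)) :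
    Function.Injective (fun (x : X) (Y : F) => j Y.1 (Submodule.Quotient.mk x)) ∧
    Topology.IsEmbedding (fun (x : X) (Y : F) => j Y.1 (Submodule.Quotient.mk x)) ∧
    IsCompact (closure (Set.range
      (fun (x : X) (Y : F) => j Y.1 (Submodule.Quotient.mk x)))) := by
  classical
  -- The quotient map X → X ⧸ ⊥ is a homeomorphism (inverse of quotEquivOfEqBot)
  have hmk : Topology.IsEmbedding
      (fun x : X => (Submodule.Quotient.mk x : X ⧸ (⊥ : Submodule ℝ X))) := by
    have hopen : IsOpenMap
        (fun x : X => (Submodule.Quotient.mk x : X ⧸ (⊥ : Submodule ℝ X))) :=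
      QuotientAddGroup.isOpenQuotientMap_mk.isOpenMap
    have hinj : Function.Injective
        (fun x : X => (Submodule.Quotient.mk x : X ⧸ (⊥ : Submodule ℝ X))) := by
      intro a b hab
      have := (Submodule.Quotient.eq (⊥ : Submodule ℝ X)).mp hab
      simpa [sub_eq_zero] using this
    exact (Topology.IsOpenEmbedding.of_continuous_injective_isOpenMap
      continuous_quot_mk hinj hopen).isEmbedding
  -- component at ⊥ is an embedding
  have hcomp : Topology.IsEmbedding
      (fun x : X => j ⊥ (Submodule.Quotient.mk x)) :=
    (hjemb ⊥).comp hmk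
  have hcontmk : ∀ Y : Submodule ℝ X,
      Continuous (fun x : X => (Submodule.Quotient.mk x : X ⧸ Y)) := fun Y =>
    continuous_quot_mk
  have hcont : Continuous
      (fun (x : X) (Y : F) => j Y.1 (Submodule.Quotient.mk x)) :=
    continuous_pi fun Y => (hjemb Y.1).continuous.comp (hcontmk Y.1)
  have hemb : Topology.IsEmbedding
      (fun (x : X) (Y : F) => j Y.1 (Submodule.Quotient.mk x)) := by
    refine Topology.IsEmbedding.of_comp hcont (continuous_apply (⟨⊥, hbot⟩ : F)) ?_
    exact hcomp
  refine ⟨hemb.injective, hemb, ?_⟩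
  exact isClosed_closure.isCompact
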